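/- Let a, b > 0 and 0 < γ < 1. If f : ℕ → ℝ satisfies f(0) = 1 and, for all m ≥ 1, ∑_{k=1}^{m} f(m-k)·(1-γ)^k = f(m)·(a + m·b), then for all m ≥ 1, f(m) = ((1-γ)^m / (a+b)) · ∏_{i=2}^{m} (1 + a + (i-1)b) / (a + i·b). -/

import Mathlib

theorem stmt_0 (a b γ : ℝ) (ha : 0 < a) (hb : 0 < b) (hγ0 : 0 < γ) (hγ1 : γ < 1)
    (f : ℕ → ℝ) (hf0 : f 0 = 1)
    (hrec : ∀ m : ℕ, 1 ≤ m →
      ∑ k ∈ Finset.Icc 1 m, f (m - k) * (1 - γ) ^ k = f m * (a + (m : ℝ) * b)) :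
    ∀ m : ℕ, 1 ≤ m →
      f m = (1 - γ) ^ m / (a + b) *
        ∏ i ∈ Finset.Icc 2 m, (1 + a + ((i : ℝ) - 1) * b) / (a + (i : ℝ) * b) := by
  have hab : a + b ≠ 0 := by positivity
  -- key recurrence step
  have hstep : ∀ m : ℕ, 1 ≤ m →
      f (m + 1) * (a + ((m : ℝ) + 1) * b) = (1 - γ) * f m * (1 + a + (m : ℝ) * b) := by
    intro m hm
    have h1 := hrec (m + 1) (by omega)
    have h2 := hrec m hm
    rw [← Finset.Ico_add_one_right_eq_Icc, Finset.sum_Ico_eq_sum_range] at h1 h2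
    simp only [Nat.succ_sub_one, Nat.add_sub_cancel] at h1 h2
    have hre : ∀ i ∈ Finset.range (m + 1),
        f (m + 1 - (1 + i)) * (1 - γ) ^ (1 + i) = (1 - γ) * (f (m - i) * (1 - γ) ^ i) := by
      intro i hi
      have : m + 1 - (1 + i) = m - i := by omega
      rw [this, pow_add]; ring
    rw [Finset.sum_congr rfl hre, ← Finset.mul_sum, Finset.sum_range_succ'] at h1
    have hre2 : ∀ i ∈ Finset.range m,
        f (m - (i + 1)) * (1 - γ) ^ (i + 1) = f (m - (1 + i)) * (1 - γ) ^ (1 + i) := by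
      intro i hi
      rw [add_comm 1 i]
    rw [Finset.sum_congr rfl hre2, Nat.sub_zero, pow_zero, mul_one, h2] at h1
    have : m + 1 - m = 1 := by omega
    push_cast at h1 ⊢
    linarith [h1]
  intro m hm
  induction m, hm using Nat.le_induction with
  | base =>
    have h1 := hrec 1 le_rfl
    simp [hf0] at h1
    have : Finset.Icc 2 1 = (∅ : Finset ℕ) := by decide
    rw [this, Finset.prod_empty]
    push_cast
    have hab' : a + 1 * b ≠ 0 := by positivity
    field_simp at h1 ⊢
    linarith [h1]
  | succ n hn ih =>
    have ihn := ih
    have hs := hstep n hn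
    have hd : a + ((n : ℝ) + 1) * b ≠ 0 := by positivity
    have hf1 : f (n + 1) = (1 - γ) * f n * (1 + a + (n : ℝ) * b) / (a + ((n : ℝ) + 1) * b) := by
      field_simp at hs ⊢
      linarith [hs]
    rw [Finset.prod_Icc_succ_top (by omega : 2 ≤ n + 1)]
    rw [hf1, ihn]
    push_cast
    field_simp
    ring
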